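/- The Voronoi cell of the lattice Λ at the origin, K = {x ∈ ℝ³ : ‖x‖ ≤ ‖x − λ‖ for all λ ∈ Λ}, equals the truncated octahedron {x ∈ ℝ³ : |x1| ≤ √2, |x2| ≤ √2, |x3| ≤ √2, and |x1|+|x2|+|x3| ≤ 3√2/2}. -/

import Mathlib

noncomputable section

def lam1 : EuclideanSpace ℝ (Fin 3) := Real.sqrt 2 • WithLp.toLp 2 (![1, -1, -1] : Fin 3 → ℝ)
def lam2 : EuclideanSpace ℝ (Fin 3) := Real.sqrt 2 • WithLp.toLp 2 (![-1, 1, -1] : Fin 3 → ℝ)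
def lam3 : EuclideanSpace ℝ (Fin 3) := Real.sqrt 2 • WithLp.toLp 2 (![-1, -1, 1] : Fin 3 → ℝ)

/-- The additive subgroup Λ of ℝ³ generated by λ1, λ2, λ3. -/
def Lambda : AddSubgroup (EuclideanSpace ℝ (Fin 3)) :=
  AddSubgroup.closure {lam1, lam2, lam3}

lemma lam1_0 : lam1 0 = Real.sqrt 2 := by show Real.sqrt 2 * 1 = _; ring
lemma lam1_1 : lam1 1 = -Real.sqrt 2 := by show Real.sqrt 2 * (-1) = _; ring
lemma lam1_2 : lam1 2 = -Real.sqrt 2 := by show Real.sqrt 2 * (-1) = _; ring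
lemma lam2_0 : lam2 0 = -Real.sqrt 2 := by show Real.sqrt 2 * (-1) = _; ring
lemma lam2_1 : lam2 1 = Real.sqrt 2 := by show Real.sqrt 2 * 1 = _; ring
lemma lam2_2 : lam2 2 = -Real.sqrt 2 := by show Real.sqrt 2 * (-1) = _; ring
lemma lam3_0 : lam3 0 = -Real.sqrt 2 := by show Real.sqrt 2 * (-1) = _; ring
lemma lam3_1 : lam3 1 = -Real.sqrt 2 := by show Real.sqrt 2 * (-1) = _; ring
lemma lam3_2 : lam3 2 = Real.sqrt 2 := by show Real.sqrt 2 * 1 = _; ring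

lemma norm_le_iff' (x l : EuclideanSpace ℝ (Fin 3)) :
    ‖x‖ ≤ ‖x - l‖ ↔ 2*(x 0*l 0 + x 1*l 1 + x 2*l 2) ≤ l 0^2 + l 1^2 + l 2^2 := by
  rw [EuclideanSpace.norm_eq, EuclideanSpace.norm_eq,
    Real.sqrt_le_sqrt_iff (by positivity)]
  simp only [Fin.sum_univ_three, PiLp.sub_apply, Real.norm_eq_abs, sq_abs]
  constructor <;> intro h <;> nlinarith [h]

/-- The subgroup of vectors √2·(m,n,p) with m,n,p integers of equal parity. -/
def goodSet : AddSubgroup (EuclideanSpace ℝ (Fin 3)) where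
  carrier := {l | ∃ m n p : ℤ, (m % 2 = n % 2 ∧ n % 2 = p % 2) ∧
    l 0 = Real.sqrt 2 * m ∧ l 1 = Real.sqrt 2 * n ∧ l 2 = Real.sqrt 2 * p}
  add_mem' := by
    rintro a b ⟨m, n, p, hpar, h0, h1, h2⟩ ⟨m', n', p', hpar', h0', h1', h2'⟩
    refine ⟨m + m', n + n', p + p', by omega, ?_, ?_, ?_⟩ <;>
      simp only [PiLp.add_apply, h0, h1, h2, h0', h1', h2'] <;> push_cast <;> ring
  zero_mem' := ⟨0, 0, 0, by omega, by simp, by simp, by simp⟩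
  neg_mem' := by
    rintro a ⟨m, n, p, hpar, h0, h1, h2⟩
    refine ⟨-m, -n, -p, by omega, ?_, ?_, ?_⟩ <;>
      simp only [PiLp.neg_apply, h0, h1, h2] <;> push_cast <;> ring

lemma Lambda_le_goodSet : Lambda ≤ goodSet := by
  rw [Lambda, AddSubgroup.closure_le]
  rintro l (rfl | rfl | rfl)
  · exact ⟨1, -1, -1, by omega, by rw [lam1_0]; norm_num, by rw [lam1_1]; push_cast; ring,
      by rw [lam1_2]; push_cast; ring⟩
  · exact ⟨-1, 1, -1, by omega, by rw [lam2_0]; push_cast; ring, by rw [lam2_1]; norm_num,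
      by rw [lam2_2]; push_cast; ring⟩
  · exact ⟨-1, -1, 1, by omega, by rw [lam3_0]; push_cast; ring, by rw [lam3_1]; push_cast; ring,
      by rw [lam3_2]; norm_num⟩

lemma coord_even (a : ℝ) (m : ℤ) (ha : |a| ≤ Real.sqrt 2) (hm : m % 2 = 0) :
    2 * (a * (Real.sqrt 2 * m)) ≤ (Real.sqrt 2 * m)^2 := by
  have hs : Real.sqrt 2 ^ 2 = 2 := Real.sq_sqrt (by norm_num)
  have hs0 : (0:ℝ) < Real.sqrt 2 := Real.sqrt_pos.2 (by norm_num)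
  have hZ : 2 * |m| ≤ m ^ 2 := by
    obtain ⟨k, rfl⟩ : ∃ k, m = 2 * k := ⟨m / 2, by omega⟩
    have hab : |2 * k| = 2 * |k| := by rw [abs_mul]; norm_num
    rw [hab]
    rcases eq_or_ne k 0 with rfl | hk
    · simp
    · have h1 : 1 ≤ |k| := Int.one_le_abs hk
      nlinarith [sq_abs k]
  have hR : 2 * |(m:ℝ)| ≤ (m:ℝ) ^ 2 := by exact_mod_cast hZ
  have h1 : a * (m:ℝ) ≤ |a| * |(m:ℝ)| := (le_abs_self _).trans (abs_mul a m).le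
  nlinarith [abs_nonneg (m:ℝ), abs_nonneg a,
    mul_le_mul_of_nonneg_right ha (abs_nonneg (m:ℝ)),
    mul_le_mul_of_nonneg_left h1 hs0.le]

lemma real_odd (A B C M N P : ℝ) (hA : 0 ≤ A) (hB : 0 ≤ B) (hC : 0 ≤ C)
    (hA2 : A ≤ Real.sqrt 2) (hB2 : B ≤ Real.sqrt 2) (hC2 : C ≤ Real.sqrt 2)
    (hsum : A + B + C ≤ 3 * Real.sqrt 2 / 2)
    (hM : 1 ≤ M) (hN : 1 ≤ N) (hP : 1 ≤ P) :
    Real.sqrt 2 * (A * M + B * N + C * P) ≤ M ^ 2 + N ^ 2 + P ^ 2 := by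
  have hs : Real.sqrt 2 ^ 2 = 2 := Real.sq_sqrt (by norm_num)
  have hs0 : (0:ℝ) < Real.sqrt 2 := Real.sqrt_pos.2 (by norm_num)
  have h2A : Real.sqrt 2 * A ≤ 2 := by nlinarith
  have h2B : Real.sqrt 2 * B ≤ 2 := by nlinarith
  have h2C : Real.sqrt 2 * C ≤ 2 := by nlinarith
  nlinarith [mul_nonneg (by linarith : (0:ℝ) ≤ M - 1) (by linarith : (0:ℝ) ≤ 2 - Real.sqrt 2 * A),
    mul_nonneg (by linarith : (0:ℝ) ≤ N - 1) (by linarith : (0:ℝ) ≤ 2 - Real.sqrt 2 * B),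
    mul_nonneg (by linarith : (0:ℝ) ≤ P - 1) (by linarith : (0:ℝ) ≤ 2 - Real.sqrt 2 * C),
    sq_nonneg (M - 1), sq_nonneg (N - 1), sq_nonneg (P - 1),
    mul_le_mul_of_nonneg_left hsum hs0.le]

lemma key_ineq (a b c : ℝ) (m n p : ℤ) (hpar : m % 2 = n % 2 ∧ n % 2 = p % 2)
    (ha : |a| ≤ Real.sqrt 2) (hb : |b| ≤ Real.sqrt 2) (hc : |c| ≤ Real.sqrt 2)
    (habc : |a| + |b| + |c| ≤ 3 * Real.sqrt 2 / 2) :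
    2 * (a * (Real.sqrt 2 * m) + b * (Real.sqrt 2 * n) + c * (Real.sqrt 2 * p)) ≤
      (Real.sqrt 2 * m)^2 + (Real.sqrt 2 * n)^2 + (Real.sqrt 2 * p)^2 := by
  have hs : Real.sqrt 2 ^ 2 = 2 := Real.sq_sqrt (by norm_num)
  have hs0 : (0:ℝ) < Real.sqrt 2 := Real.sqrt_pos.2 (by norm_num)
  rcases Int.even_or_odd m with hm | hm
  · -- all even
    have hm2 : m % 2 = 0 := Int.even_iff.mp hm
    have hn2 : n % 2 = 0 := by omega
    have hp2 : p % 2 = 0 := by omega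
    have := coord_even a m ha hm2
    have := coord_even b n hb hn2
    have := coord_even c p hc hp2
    linarith
  · -- all odd
    have hmod : m % 2 = 1 := Int.odd_iff.mp hm
    have hm1 : 1 ≤ |m| := Int.one_le_abs (by omega)
    have hn1 : 1 ≤ |n| := Int.one_le_abs (by omega)
    have hp1 : 1 ≤ |p| := Int.one_le_abs (by omega)
    have hM : (1:ℝ) ≤ |(m:ℝ)| := by exact_mod_cast (by exact_mod_cast hm1 : (1:ℤ) ≤ |m|)
    have hN : (1:ℝ) ≤ |(n:ℝ)| := by exact_mod_cast (by exact_mod_cast hn1 : (1:ℤ) ≤ |n|)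
    have hP : (1:ℝ) ≤ |(p:ℝ)| := by exact_mod_cast (by exact_mod_cast hp1 : (1:ℤ) ≤ |p|)
    have h1 : a * (m:ℝ) ≤ |a| * |(m:ℝ)| := (le_abs_self _).trans (abs_mul a m).le
    have h2 : b * (n:ℝ) ≤ |b| * |(n:ℝ)| := (le_abs_self _).trans (abs_mul b n).le
    have h3 : c * (p:ℝ) ≤ |c| * |(p:ℝ)| := (le_abs_self _).trans (abs_mul c p).le
    have hmain := real_odd |a| |b| |c| |(m:ℝ)| |(n:ℝ)| |(p:ℝ)|
      (abs_nonneg a) (abs_nonneg b) (abs_nonneg c) ha hb hc habc hM hN hP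
    have hsq : ∀ t : ℝ, |t| ^ 2 = t ^ 2 := fun t => sq_abs t
    nlinarith [mul_le_mul_of_nonneg_left h1 hs0.le, mul_le_mul_of_nonneg_left h2 hs0.le,
      mul_le_mul_of_nonneg_left h3 hs0.le, hsq (m:ℝ), hsq (n:ℝ), hsq (p:ℝ)]

set_option maxHeartbeats 2000000 in
/-- The Voronoi cell of the lattice Λ at the origin equals the truncated octahedron
`{x : |x1| ≤ √2, |x2| ≤ √2, |x3| ≤ √2, |x1|+|x2|+|x3| ≤ 3√2/2}`. -/
theorem voronoi_cell_eq_truncated_octahedron :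
    {x : EuclideanSpace ℝ (Fin 3) | ∀ l ∈ Lambda, ‖x‖ ≤ ‖x - l‖} =
      {x : EuclideanSpace ℝ (Fin 3) |
        |x 0| ≤ Real.sqrt 2 ∧ |x 1| ≤ Real.sqrt 2 ∧ |x 2| ≤ Real.sqrt 2 ∧
        |x 0| + |x 1| + |x 2| ≤ 3 * Real.sqrt 2 / 2} := by
  have hs : Real.sqrt 2 ^ 2 = 2 := Real.sq_sqrt (by norm_num)
  have hs0 : (0:ℝ) < Real.sqrt 2 := Real.sqrt_pos.2 (by norm_num)
  have h1mem : lam1 ∈ Lambda := AddSubgroup.subset_closure (Set.mem_insert _ _)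
  have h2mem : lam2 ∈ Lambda :=
    AddSubgroup.subset_closure (Set.mem_insert_of_mem _ (Set.mem_insert _ _))
  have h3mem : lam3 ∈ Lambda :=
    AddSubgroup.subset_closure (Set.mem_insert_of_mem _ (Set.mem_insert_of_mem _ rfl))
  ext x
  simp only [Set.mem_setOf_eq]
  constructor
  · intro h
    -- coordinate bounds from l = ∓(lam_i + lam_j)
    have key : ∀ l ∈ Lambda, 2*(x 0*l 0 + x 1*l 1 + x 2*l 2) ≤ l 0^2 + l 1^2 + l 2^2 :=
      fun l hl => (norm_le_iff' x l).1 (h l hl)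
    have ha1 := key (lam2 + lam3) (add_mem h2mem h3mem)
    have ha2 := key (-(lam2 + lam3)) (neg_mem (add_mem h2mem h3mem))
    have hb1 := key (lam1 + lam3) (add_mem h1mem h3mem)
    have hb2 := key (-(lam1 + lam3)) (neg_mem (add_mem h1mem h3mem))
    have hc1 := key (lam1 + lam2) (add_mem h1mem h2mem)
    have hc2 := key (-(lam1 + lam2)) (neg_mem (add_mem h1mem h2mem))
    simp only [PiLp.add_apply, PiLp.neg_apply, lam1_0, lam1_1, lam1_2, lam2_0, lam2_1, lam2_2,
      lam3_0, lam3_1, lam3_2] at ha1 ha2 hb1 hb2 hc1 hc2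
    have hx0 : |x 0| ≤ Real.sqrt 2 := abs_le.2 ⟨by nlinarith, by nlinarith⟩
    have hx1 : |x 1| ≤ Real.sqrt 2 := abs_le.2 ⟨by nlinarith, by nlinarith⟩
    have hx2 : |x 2| ≤ Real.sqrt 2 := abs_le.2 ⟨by nlinarith, by nlinarith⟩
    refine ⟨hx0, hx1, hx2, ?_⟩
    -- octant vectors
    have hsum : Real.sqrt 2 * (|x 0| + |x 1| + |x 2|) ≤ 3 := by
      rcases le_or_gt 0 (x 0) with h0 | h0 <;> rcases le_or_gt 0 (x 1) with h1 | h1 <;>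
        rcases le_or_gt 0 (x 2) with h2 | h2
      · have hk := key (-(lam1 + lam2 + lam3)) (neg_mem (add_mem (add_mem h1mem h2mem) h3mem))
        simp only [PiLp.add_apply, PiLp.neg_apply, lam1_0, lam1_1, lam1_2, lam2_0, lam2_1,
          lam2_2, lam3_0, lam3_1, lam3_2] at hk
        rw [abs_of_nonneg h0, abs_of_nonneg h1, abs_of_nonneg h2]; nlinarith
      · have hk := key (-lam3) (neg_mem h3mem)
        simp only [PiLp.neg_apply, lam3_0, lam3_1, lam3_2] at hk
        rw [abs_of_nonneg h0, abs_of_nonneg h1, abs_of_neg h2]; nlinarith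
      · have hk := key (-lam2) (neg_mem h2mem)
        simp only [PiLp.neg_apply, lam2_0, lam2_1, lam2_2] at hk
        rw [abs_of_nonneg h0, abs_of_neg h1, abs_of_nonneg h2]; nlinarith
      · have hk := key lam1 h1mem
        simp only [lam1_0, lam1_1, lam1_2] at hk
        rw [abs_of_nonneg h0, abs_of_neg h1, abs_of_neg h2]; nlinarith
      · have hk := key (-lam1) (neg_mem h1mem)
        simp only [PiLp.neg_apply, lam1_0, lam1_1, lam1_2] at hk
        rw [abs_of_neg h0, abs_of_nonneg h1, abs_of_nonneg h2]; nlinarith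
      · have hk := key lam2 h2mem
        simp only [lam2_0, lam2_1, lam2_2] at hk
        rw [abs_of_neg h0, abs_of_nonneg h1, abs_of_neg h2]; nlinarith
      · have hk := key lam3 h3mem
        simp only [lam3_0, lam3_1, lam3_2] at hk
        rw [abs_of_neg h0, abs_of_neg h1, abs_of_nonneg h2]; nlinarith
      · have hk := key (lam1 + lam2 + lam3) (add_mem (add_mem h1mem h2mem) h3mem)
        simp only [PiLp.add_apply, lam1_0, lam1_1, lam1_2, lam2_0, lam2_1, lam2_2,
          lam3_0, lam3_1, lam3_2] at hk
        rw [abs_of_neg h0, abs_of_neg h1, abs_of_neg h2]; nlinarith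
    nlinarith [abs_nonneg (x 0), abs_nonneg (x 1), abs_nonneg (x 2)]
  · rintro ⟨hx0, hx1, hx2, hsum⟩ l hl
    obtain ⟨m, n, p, hpar, h0, h1, h2⟩ := Lambda_le_goodSet hl
    rw [norm_le_iff', h0, h1, h2]
    exact key_ineq (x 0) (x 1) (x 2) m n p hpar hx0 hx1 hx2 hsum

end
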